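/- arXiv:0812.5023 — 2 statements merged into one kernel-verified Lean document; each statement's English description precedes it below -/
import Mathlib

section
/- Assume Q is hermitian. Let I' be a subset of I and Q' = (Q_{ij})_{i,j∈I'} the corresponding submatrix. Then the canonical k-algebra homomorphism H_n(Q') → H_n(Q), sending each generator 1_ν, x_{a,ν}, τ_{i,ν} (ν ∈ (I')^n) to the generator of the same name, is injective; moreover, for all ν, ν' ∈ (I')^n it restricts to a bijection 1_ν H_n(Q') 1_{ν'} → 1_ν H_n(Q) 1_{ν'}. -/
open scoped BigOperators

namespace Rouq

variable {k : Type} [CommRing k] {I : Type} {n : ℕ}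

/-- Generators of the algebra `H_n(Q)`: idempotents `1_ν`, polynomial generators
`x_{a,ν}` and intertwiners `τ_{i,ν}` (in 0-based indexing). -/
inductive Gen (I : Type) (n : ℕ) : Type
  | unit (ν : Fin n → I) : Gen I n
  | x (a : Fin n) (ν : Fin n → I) : Gen I n
  | tau (i : ℕ) (h : i + 1 < n) (ν : Fin n → I) : Gen I n

/-- The free (unital) algebra on the generators. -/
abbrev FA (k : Type) [CommRing k] (I : Type) (n : ℕ) := FreeAlgebra k (Gen I n)

def E (k : Type) [CommRing k] (ν : Fin n → I) : FA k I n :=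
  FreeAlgebra.ι k (Gen.unit ν)

def Xg (k : Type) [CommRing k] (a : Fin n) (ν : Fin n → I) : FA k I n :=
  FreeAlgebra.ι k (Gen.x a ν)

def Tg (k : Type) [CommRing k] (i : ℕ) (h : i + 1 < n) (ν : Fin n → I) : FA k I n :=
  FreeAlgebra.ι k (Gen.tau i h ν)

/-- `x_{a,ν}` with a natural-number index (junk value `0` when out of range). -/
def Xn (k : Type) [CommRing k] (a : ℕ) (ν : Fin n → I) : FA k I n :=
  if h : a < n then Xg k ⟨a, h⟩ ν else 0

/-- `τ_{i,ν}` with a natural-number index (junk value `0` when out of range). -/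
def Tn (k : Type) [CommRing k] (i : ℕ) (ν : Fin n → I) : FA k I n :=
  if h : i + 1 < n then Tg k i h ν else 0

/-- The action of the transposition `s_i = (i, i+1)` on sequences `ν ∈ I^n`. -/
def swapSeq (i : ℕ) (ν : Fin n → I) : Fin n → I :=
  if h : i + 1 < n then ν ∘ (Equiv.swap (⟨i, by omega⟩ : Fin n) ⟨i + 1, h⟩) else ν

/-- Evaluation of a polynomial `Q ∈ k[u,v]` at the pair `(a, b)`, localized at
the idempotent `u` (the constant term contributes a multiple of `u`). -/
noncomputable def pev (Q : MvPolynomial (Fin 2) k) (a b u : FA k I n) : FA k I n :=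
  ∑ m ∈ Q.support, Q.coeff m • (a ^ m 0 * b ^ m 1 * u)

/-- Evaluation of the divided difference
`(Q(xhi, xmid) - Q(xlo, xmid))/(xhi - xlo)`, localized at the idempotent `u`. -/
noncomputable def pevDiff (Q : MvPolynomial (Fin 2) k) (xlo xmid xhi u : FA k I n) :
    FA k I n :=
  ∑ m ∈ Q.support, Q.coeff m •
    ((∑ t ∈ Finset.range (m 0), xhi ^ t * xlo ^ (m 0 - 1 - t)) * xmid ^ m 1 * u)

/-- The defining relations of `H_n(Q)`. -/
inductive Rel (Q : I → I → MvPolynomial (Fin 2) k) : FA k I n → FA k I n → Prop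
  | unit_mul_self (ν : Fin n → I) :
      Rel Q (E k ν * E k ν) (E k ν)
  | unit_mul_ne (ν ν' : Fin n → I) (h : ν ≠ ν') :
      Rel Q (E k ν * E k ν') 0
  | tau_sandwich (i : ℕ) (h : i + 1 < n) (ν : Fin n → I) :
      Rel Q (Tg k i h ν) (E k (swapSeq i ν) * Tg k i h ν * E k ν)
  | x_sandwich (a : Fin n) (ν : Fin n → I) :
      Rel Q (Xg k a ν) (E k ν * Xg k a ν * E k ν)
  | x_comm (a b : Fin n) (ν : Fin n → I) :
      Rel Q (Xg k a ν * Xg k b ν) (Xg k b ν * Xg k a ν)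
  | tau_sq (i : ℕ) (h : i + 1 < n) (ν : Fin n → I) :
      Rel Q (Tg k i h (swapSeq i ν) * Tg k i h ν)
        (pev (Q (ν ⟨i, by omega⟩) (ν ⟨i + 1, h⟩)) (Xn k i ν) (Xn k (i + 1) ν) (E k ν))
  | tau_far (i j : ℕ) (hi : i + 1 < n) (hj : j + 1 < n) (hij : i + 2 ≤ j) (ν : Fin n → I) :
      Rel Q (Tg k i hi (swapSeq j ν) * Tg k j hj ν)
        (Tg k j hj (swapSeq i ν) * Tg k i hi ν)
  | braid_eq (i : ℕ) (h : i + 2 < n) (ν : Fin n → I)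
      (hv : ν ⟨i, by omega⟩ = ν ⟨i + 2, h⟩) :
      Rel Q
        (Tg k (i + 1) (by omega) (swapSeq i (swapSeq (i + 1) ν)) *
            Tg k i (by omega) (swapSeq (i + 1) ν) * Tg k (i + 1) (by omega) ν)
        (Tg k i (by omega) (swapSeq (i + 1) (swapSeq i ν)) *
            Tg k (i + 1) (by omega) (swapSeq i ν) * Tg k i (by omega) ν +
          pevDiff (Q (ν ⟨i, by omega⟩) (ν ⟨i + 1, by omega⟩))
            (Xn k i ν) (Xn k (i + 1) ν) (Xn k (i + 2) ν) (E k ν))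
  | braid_ne (i : ℕ) (h : i + 2 < n) (ν : Fin n → I)
      (hv : ν ⟨i, by omega⟩ ≠ ν ⟨i + 2, h⟩) :
      Rel Q
        (Tg k (i + 1) (by omega) (swapSeq i (swapSeq (i + 1) ν)) *
            Tg k i (by omega) (swapSeq (i + 1) ν) * Tg k (i + 1) (by omega) ν)
        (Tg k i (by omega) (swapSeq (i + 1) (swapSeq i ν)) *
            Tg k (i + 1) (by omega) (swapSeq i ν) * Tg k i (by omega) ν)
  | tau_x_i (i : ℕ) (h : i + 1 < n) (ν : Fin n → I)
      (hv : ν ⟨i, by omega⟩ = ν ⟨i + 1, h⟩) :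
      Rel Q (Tg k i h ν * Xn k i ν)
        (Xn k (i + 1) (swapSeq i ν) * Tg k i h ν - E k ν)
  | tau_x_i1 (i : ℕ) (h : i + 1 < n) (ν : Fin n → I)
      (hv : ν ⟨i, by omega⟩ = ν ⟨i + 1, h⟩) :
      Rel Q (Tg k i h ν * Xn k (i + 1) ν)
        (Xn k i (swapSeq i ν) * Tg k i h ν + E k ν)
  | tau_x_other (i : ℕ) (h : i + 1 < n) (a : Fin n) (ν : Fin n → I)
      (hv : (a.val ≠ i ∧ a.val ≠ i + 1) ∨ ν ⟨i, by omega⟩ ≠ ν ⟨i + 1, h⟩) :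
      Rel Q (Tg k i h ν * Xg k a ν)
        (Xg k (Equiv.swap (⟨i, by omega⟩ : Fin n) ⟨i + 1, h⟩ a) (swapSeq i ν) * Tg k i h ν)

/-- The algebra `H_n(Q)`, as a quotient of the free algebra by the defining
relations. -/
abbrev HQ (k : Type) [CommRing k] (I : Type) (n : ℕ)
    (Q : I → I → MvPolynomial (Fin 2) k) :=
  RingQuot (Rel (k := k) (I := I) (n := n) Q)

/-- The quotient map. -/
noncomputable def mk (Q : I → I → MvPolynomial (Fin 2) k) : FA k I n →ₐ[k] HQ k I n Q :=
  RingQuot.mkAlgHom k (Rel Q)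

/-- `Q` is hermitian: `Q_{ij}(u,v) = Q_{ji}(v,u)`. -/
def Hermitian (Q : I → I → MvPolynomial (Fin 2) k) : Prop :=
  ∀ i j, Q i j = MvPolynomial.rename (Equiv.swap (0 : Fin 2) 1) (Q j i)

/-- The (possibly non-unital) algebra `H_n(Q)` proper: the non-unital subalgebra
of the presented algebra generated by the generators. -/
noncomputable def Hgen (Q : I → I → MvPolynomial (Fin 2) k) :
    NonUnitalSubalgebra k (HQ k I n Q) :=
  NonUnitalAlgebra.adjoin k (Set.range fun g : Gen I n => mk Q (FreeAlgebra.ι k g))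

/-- The permutation of `Fin n` given by a word in the Coxeter generators. -/
def permOfWord (n : ℕ) (l : List ℕ) : Equiv.Perm (Fin n) :=
  (l.map fun i =>
    if h : i + 1 < n then Equiv.swap (⟨i, by omega⟩ : Fin n) ⟨i + 1, h⟩ else 1).prod

/-- `l` is a reduced word for the permutation `w`. -/
def IsReducedWordFor (n : ℕ) (l : List ℕ) (w : Equiv.Perm (Fin n)) : Prop :=
  (∀ i ∈ l, i + 1 < n) ∧ permOfWord n l = w ∧
    ∀ l' : List ℕ, (∀ i ∈ l', i + 1 < n) → permOfWord n l' = w → l.length ≤ l'.length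

/-- Action of a word of simple transpositions on a sequence. -/
def seqActWord : List ℕ → (Fin n → I) → (Fin n → I)
  | [], ν => ν
  | i :: l, ν => swapSeq i (seqActWord l ν)

/-- `τ_{i_1, s_{i_2}⋯s_{i_r}(ν)} ⋯ τ_{i_{r-1}, s_{i_r}(ν)} τ_{i_r, ν}` for a word
`l = [i_1, …, i_r]`; the empty word gives the idempotent `1_ν`. -/
noncomputable def tauWord (k : Type) [CommRing k] : List ℕ → (Fin n → I) → FA k I n
  | [], ν => E k ν
  | i :: l, ν => Tn k i (seqActWord l ν) * tauWord k l ν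

/-- The standard reduced word for the longest element of `S_m` (0-based). -/
def longWord (m : ℕ) : List ℕ :=
  (List.range m).foldr (fun j acc => (List.range j).reverse ++ acc) []



/-! ### Auxiliary development for statement2 -/

variable {k : Type} [CommRing k] {I : Type} {n : ℕ}

def Good (I' : Set I) (ν : Fin n → I) : Prop := ∀ b, ν b ∈ I'

def res (I' : Set I) {ν : Fin n → I} (h : Good I' ν) : Fin n → ↥I' := fun b => ⟨ν b, h b⟩

lemma good_coe (I' : Set I) (ν : Fin n → ↥I') : Good I' (fun b => (ν b : I)) :=
  fun b => (ν b).2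

lemma res_coe (I' : Set I) (ν : Fin n → ↥I') : res I' (good_coe I' ν) = ν := by
  funext b; rfl

lemma res_inj (I' : Set I) {ν ν' : Fin n → I} (h : Good I' ν) (h' : Good I' ν')
    (he : res I' h = res I' h') : ν = ν' :=
  funext fun b => congrArg Subtype.val (congrFun he b)

lemma good_swapSeq (I' : Set I) (i : ℕ) (ν : Fin n → I) :
    Good I' (swapSeq i ν) ↔ Good I' ν := by
  unfold swapSeq
  split
  · next h =>
    constructor
    · intro hg b
      have := hg ((Equiv.swap (⟨i, by omega⟩ : Fin n) ⟨i + 1, h⟩) b)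
      simpa using this
    · intro hg b; exact hg _
  · exact Iff.rfl

lemma res_swapSeq (I' : Set I) (i : ℕ) {ν : Fin n → I} (h : Good I' ν)
    (h2 : Good I' (swapSeq i ν)) : res I' h2 = swapSeq i (res I' h) := by
  funext b
  apply Subtype.ext
  show swapSeq i ν b = ((swapSeq i (res I' h) b : ↥I') : I)
  unfold swapSeq
  split <;> rfl

open Classical in
noncomputable def G0 (Q : I → I → MvPolynomial (Fin 2) k) (I' : Set I) :
    Gen I n → HQ k ↥I' n (fun i j => Q i j)
  | .unit ν => if h : Good I' ν then mk (fun i j : ↥I' => Q i j) (E k (res I' h)) else 0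
  | .x a ν => if h : Good I' ν then mk (fun i j : ↥I' => Q i j) (Xg k a (res I' h)) else 0
  | .tau i hi ν => if h : Good I' ν then mk (fun i j : ↥I' => Q i j) (Tg k i hi (res I' h)) else 0

noncomputable def Gmap (Q : I → I → MvPolynomial (Fin 2) k) (I' : Set I) :
    FA k I n →ₐ[k] HQ k ↥I' n (fun i j => Q i j) :=
  FreeAlgebra.lift k (G0 Q I')

variable (Q : I → I → MvPolynomial (Fin 2) k) (I' : Set I)

lemma mk_rel {p q : FA k I n} (h : Rel Q p q) : mk Q p = mk Q q :=
  RingQuot.mkAlgHom_rel k h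

lemma Gmap_E_good {ν : Fin n → I} (hg : Good I' ν) :
    Gmap Q I' (E k ν) = mk (fun i j : ↥I' => Q i j) (E k (res I' hg)) := by
  simp [Gmap, E, G0, dif_pos hg]

lemma Gmap_E_bad {ν : Fin n → I} (hg : ¬ Good I' ν) :
    Gmap Q I' (E k ν) = 0 := by
  simp [Gmap, E, G0, dif_neg hg]

lemma Gmap_Xg_good (a : Fin n) {ν : Fin n → I} (hg : Good I' ν) :
    Gmap Q I' (Xg k a ν) = mk (fun i j : ↥I' => Q i j) (Xg k a (res I' hg)) := by
  simp [Gmap, Xg, G0, dif_pos hg]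

lemma Gmap_Xg_bad (a : Fin n) {ν : Fin n → I} (hg : ¬ Good I' ν) :
    Gmap Q I' (Xg k a ν) = 0 := by
  simp [Gmap, Xg, G0, dif_neg hg]

lemma Gmap_Tg_good (i : ℕ) (hi : i + 1 < n) {ν : Fin n → I} (hg : Good I' ν) :
    Gmap Q I' (Tg k i hi ν) = mk (fun i j : ↥I' => Q i j) (Tg k i hi (res I' hg)) := by
  simp [Gmap, Tg, G0, dif_pos hg]

lemma Gmap_Tg_bad (i : ℕ) (hi : i + 1 < n) {ν : Fin n → I} (hg : ¬ Good I' ν) :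
    Gmap Q I' (Tg k i hi ν) = 0 := by
  simp [Gmap, Tg, G0, dif_neg hg]

lemma Gmap_Xn_good (a : ℕ) {ν : Fin n → I} (hg : Good I' ν) :
    Gmap Q I' (Xn k a ν) = mk (fun i j : ↥I' => Q i j) (Xn k a (res I' hg)) := by
  unfold Xn
  split
  · exact Gmap_Xg_good Q I' _ hg
  · simp

lemma Gmap_Xn_bad (a : ℕ) {ν : Fin n → I} (hg : ¬ Good I' ν) :
    Gmap Q I' (Xn k a ν) = 0 := by
  unfold Xn
  split
  · exact Gmap_Xg_bad Q I' _ hg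
  · simp

lemma Gmap_pev_good (P : MvPolynomial (Fin 2) k) (i j : ℕ) {ν : Fin n → I} (hg : Good I' ν) :
    Gmap Q I' (pev P (Xn k i ν) (Xn k j ν) (E k ν)) =
      mk (fun i j : ↥I' => Q i j)
        (pev P (Xn k i (res I' hg)) (Xn k j (res I' hg)) (E k (res I' hg))) := by
  simp only [pev, map_sum, map_smul, map_mul, map_pow, Gmap_Xn_good Q I' _ hg,
    Gmap_E_good Q I' hg]

lemma Gmap_pev_bad (P : MvPolynomial (Fin 2) k) (a b : FA k I n) {ν : Fin n → I}
    (hg : ¬ Good I' ν) :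
    Gmap Q I' (pev P a b (E k ν)) = 0 := by
  simp only [pev, map_sum, map_smul, map_mul, Gmap_E_bad Q I' hg, mul_zero, smul_zero,
    Finset.sum_const_zero]

lemma Gmap_pevDiff_good (P : MvPolynomial (Fin 2) k) (i j l : ℕ) {ν : Fin n → I}
    (hg : Good I' ν) :
    Gmap Q I' (pevDiff P (Xn k i ν) (Xn k j ν) (Xn k l ν) (E k ν)) =
      mk (fun i j : ↥I' => Q i j)
        (pevDiff P (Xn k i (res I' hg)) (Xn k j (res I' hg)) (Xn k l (res I' hg))
          (E k (res I' hg))) := by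
  simp only [pevDiff, map_sum, map_smul, map_mul, map_pow, Gmap_Xn_good Q I' _ hg,
    Gmap_E_good Q I' hg]

lemma Gmap_pevDiff_bad (P : MvPolynomial (Fin 2) k) (a b c : FA k I n) {ν : Fin n → I}
    (hg : ¬ Good I' ν) :
    Gmap Q I' (pevDiff P a b c (E k ν)) = 0 := by
  simp only [pevDiff, map_sum, map_smul, map_mul, Gmap_E_bad Q I' hg, mul_zero, smul_zero,
    Finset.sum_const_zero]

lemma Gmap_rel : ∀ ⦃p q : FA k I n⦄, Rel Q p q → Gmap Q I' p = Gmap Q I' q := by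
  intro p q hr
  induction hr with
  | unit_mul_self ν =>
    by_cases hg : Good I' ν
    · rw [map_mul, Gmap_E_good Q I' hg, ← map_mul]
      exact mk_rel _ (Rel.unit_mul_self _)
    · rw [map_mul, Gmap_E_bad Q I' hg]
      simp
  | unit_mul_ne ν ν' hne =>
    rw [map_mul, map_zero]
    by_cases hg : Good I' ν
    · by_cases hg' : Good I' ν'
      · rw [Gmap_E_good Q I' hg, Gmap_E_good Q I' hg', ← map_mul,
          mk_rel _ (Rel.unit_mul_ne _ _ (fun he => hne (res_inj I' hg hg' he))), map_zero]
      · rw [Gmap_E_bad Q I' hg', mul_zero]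
    · rw [Gmap_E_bad Q I' hg, zero_mul]
  | tau_sandwich i hi ν =>
    by_cases hg : Good I' ν
    · have hg' : Good I' (swapSeq i ν) := (good_swapSeq I' i ν).mpr hg
      rw [map_mul, map_mul, Gmap_E_good Q I' hg', Gmap_E_good Q I' hg,
        Gmap_Tg_good Q I' i hi hg, res_swapSeq I' i hg hg', ← map_mul, ← map_mul]
      exact mk_rel _ (Rel.tau_sandwich i hi _)
    · rw [Gmap_Tg_bad Q I' i hi hg, map_mul, Gmap_E_bad Q I' hg, mul_zero]
  | x_sandwich a ν =>
    by_cases hg : Good I' ν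
    · rw [map_mul, map_mul, Gmap_E_good Q I' hg, Gmap_Xg_good Q I' a hg,
        ← map_mul, ← map_mul]
      exact mk_rel _ (Rel.x_sandwich a _)
    · rw [map_mul, map_mul, Gmap_Xg_bad Q I' a hg]
      simp
  | x_comm a b ν =>
    by_cases hg : Good I' ν
    · rw [map_mul, map_mul, Gmap_Xg_good Q I' a hg, Gmap_Xg_good Q I' b hg,
        ← map_mul, ← map_mul]
      exact mk_rel _ (Rel.x_comm a b _)
    · rw [map_mul, map_mul, Gmap_Xg_bad Q I' a hg, Gmap_Xg_bad Q I' b hg]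
  | tau_sq i hi ν =>
    by_cases hg : Good I' ν
    · have hg' : Good I' (swapSeq i ν) := (good_swapSeq I' i ν).mpr hg
      rw [map_mul, Gmap_Tg_good Q I' i hi hg', Gmap_Tg_good Q I' i hi hg,
        res_swapSeq I' i hg hg', ← map_mul, Gmap_pev_good Q I' _ i (i + 1) hg]
      exact mk_rel _ (Rel.tau_sq i hi (res I' hg))
    · have hg' : ¬ Good I' (swapSeq i ν) := fun h => hg ((good_swapSeq I' i ν).mp h)
      rw [map_mul, Gmap_Tg_bad Q I' i hi hg', zero_mul, Gmap_pev_bad Q I' _ _ _ hg]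
  | tau_far i j hi hj hij ν =>
    by_cases hg : Good I' ν
    · have hgj : Good I' (swapSeq j ν) := (good_swapSeq I' j ν).mpr hg
      have hgi : Good I' (swapSeq i ν) := (good_swapSeq I' i ν).mpr hg
      rw [map_mul, map_mul, Gmap_Tg_good Q I' i hi hgj, Gmap_Tg_good Q I' j hj hg,
        Gmap_Tg_good Q I' j hj hgi, Gmap_Tg_good Q I' i hi hg,
        res_swapSeq I' j hg hgj, res_swapSeq I' i hg hgi, ← map_mul, ← map_mul]
      exact mk_rel _ (Rel.tau_far i j hi hj hij _)
    · rw [map_mul, map_mul, Gmap_Tg_bad Q I' j hj hg, Gmap_Tg_bad Q I' i hi hg,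
        mul_zero, mul_zero]
  | braid_eq i h ν hv =>
    by_cases hg : Good I' ν
    · have hg1 : Good I' (swapSeq (i + 1) ν) := (good_swapSeq I' _ ν).mpr hg
      have hg2 : Good I' (swapSeq i (swapSeq (i + 1) ν)) := (good_swapSeq I' _ _).mpr hg1
      have hgi : Good I' (swapSeq i ν) := (good_swapSeq I' _ ν).mpr hg
      have hgi2 : Good I' (swapSeq (i + 1) (swapSeq i ν)) := (good_swapSeq I' _ _).mpr hgi
      rw [map_mul, map_mul, map_add, map_mul, map_mul,
        Gmap_Tg_good Q I' (i + 1) (by omega) hg2, Gmap_Tg_good Q I' i (by omega) hg1,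
        Gmap_Tg_good Q I' (i + 1) (by omega) hg,
        Gmap_Tg_good Q I' i (by omega) hgi2, Gmap_Tg_good Q I' (i + 1) (by omega) hgi,
        Gmap_Tg_good Q I' i (by omega) hg,
        res_swapSeq I' i hg1 hg2, res_swapSeq I' (i + 1) hg hg1,
        res_swapSeq I' (i + 1) hgi hgi2, res_swapSeq I' i hg hgi,
        Gmap_pevDiff_good Q I' _ i (i + 1) (i + 2) hg,
        ← map_mul, ← map_mul, ← map_mul, ← map_mul, ← map_add]
      exact mk_rel _
        (Rel.braid_eq i h (res I' hg) (Subtype.ext hv))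
    · have hg1 : ¬ Good I' (swapSeq (i + 1) ν) := fun h' => hg ((good_swapSeq I' _ ν).mp h')
      have hgi : ¬ Good I' (swapSeq i ν) := fun h' => hg ((good_swapSeq I' _ ν).mp h')
      rw [map_mul, map_mul, map_add, map_mul, map_mul,
        Gmap_Tg_bad Q I' i (by omega) hg1, Gmap_Tg_bad Q I' (i + 1) (by omega) hgi,
        Gmap_pevDiff_bad Q I' _ _ _ _ hg]
      simp
  | braid_ne i h ν hv =>
    by_cases hg : Good I' ν
    · have hg1 : Good I' (swapSeq (i + 1) ν) := (good_swapSeq I' _ ν).mpr hg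
      have hg2 : Good I' (swapSeq i (swapSeq (i + 1) ν)) := (good_swapSeq I' _ _).mpr hg1
      have hgi : Good I' (swapSeq i ν) := (good_swapSeq I' _ ν).mpr hg
      have hgi2 : Good I' (swapSeq (i + 1) (swapSeq i ν)) := (good_swapSeq I' _ _).mpr hgi
      rw [map_mul, map_mul, map_mul, map_mul,
        Gmap_Tg_good Q I' (i + 1) (by omega) hg2, Gmap_Tg_good Q I' i (by omega) hg1,
        Gmap_Tg_good Q I' (i + 1) (by omega) hg,
        Gmap_Tg_good Q I' i (by omega) hgi2, Gmap_Tg_good Q I' (i + 1) (by omega) hgi,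
        Gmap_Tg_good Q I' i (by omega) hg,
        res_swapSeq I' i hg1 hg2, res_swapSeq I' (i + 1) hg hg1,
        res_swapSeq I' (i + 1) hgi hgi2, res_swapSeq I' i hg hgi,
        ← map_mul, ← map_mul, ← map_mul, ← map_mul]
      exact mk_rel _
        (Rel.braid_ne i h (res I' hg) (fun he => hv (congrArg Subtype.val he)))
    · have hg1 : ¬ Good I' (swapSeq (i + 1) ν) := fun h' => hg ((good_swapSeq I' _ ν).mp h')
      have hgi : ¬ Good I' (swapSeq i ν) := fun h' => hg ((good_swapSeq I' _ ν).mp h')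
      rw [map_mul, map_mul, map_mul, map_mul,
        Gmap_Tg_bad Q I' i (by omega) hg1, Gmap_Tg_bad Q I' (i + 1) (by omega) hgi]
      simp
  | tau_x_i i hi ν hv =>
    by_cases hg : Good I' ν
    · have hg' : Good I' (swapSeq i ν) := (good_swapSeq I' i ν).mpr hg
      rw [map_mul, map_sub, map_mul, Gmap_Tg_good Q I' i hi hg,
        Gmap_Xn_good Q I' i hg, Gmap_Xn_good Q I' (i + 1) hg',
        Gmap_E_good Q I' hg, res_swapSeq I' i hg hg',
        ← map_mul, ← map_mul, ← map_sub]
      exact mk_rel _ (Rel.tau_x_i i hi (res I' hg) (Subtype.ext hv))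
    · have hg' : ¬ Good I' (swapSeq i ν) := fun h => hg ((good_swapSeq I' i ν).mp h)
      rw [map_mul, map_sub, map_mul, Gmap_Tg_bad Q I' i hi hg,
        Gmap_Xn_bad Q I' (i + 1) hg', Gmap_E_bad Q I' hg, zero_mul, zero_mul, sub_zero]
  | tau_x_i1 i hi ν hv =>
    by_cases hg : Good I' ν
    · have hg' : Good I' (swapSeq i ν) := (good_swapSeq I' i ν).mpr hg
      rw [map_mul, map_add, map_mul, Gmap_Tg_good Q I' i hi hg,
        Gmap_Xn_good Q I' (i + 1) hg, Gmap_Xn_good Q I' i hg',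
        Gmap_E_good Q I' hg, res_swapSeq I' i hg hg',
        ← map_mul, ← map_mul, ← map_add]
      exact mk_rel _ (Rel.tau_x_i1 i hi (res I' hg) (Subtype.ext hv))
    · have hg' : ¬ Good I' (swapSeq i ν) := fun h => hg ((good_swapSeq I' i ν).mp h)
      rw [map_mul, map_add, map_mul, Gmap_Tg_bad Q I' i hi hg,
        Gmap_Xn_bad Q I' i hg', Gmap_E_bad Q I' hg, zero_mul, zero_mul, add_zero]
  | tau_x_other i hi a ν hv =>
    by_cases hg : Good I' ν
    · have hg' : Good I' (swapSeq i ν) := (good_swapSeq I' i ν).mpr hg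
      rw [map_mul, map_mul, Gmap_Tg_good Q I' i hi hg, Gmap_Xg_good Q I' a hg,
        Gmap_Xg_good Q I' _ hg', res_swapSeq I' i hg hg', ← map_mul, ← map_mul]
      refine mk_rel _ (Rel.tau_x_other i hi a (res I' hg) ?_)
      rcases hv with hv | hv
      · exact Or.inl hv
      · exact Or.inr (fun he => hv (congrArg Subtype.val he))
    · have hg' : ¬ Good I' (swapSeq i ν) := fun h => hg ((good_swapSeq I' i ν).mp h)
      rw [map_mul, map_mul, Gmap_Tg_bad Q I' i hi hg, Gmap_Xg_bad Q I' _ hg',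
        mul_zero, zero_mul]

variable {k : Type} [CommRing k] {I : Type} {n : ℕ}

def genSeq : Gen I n → (Fin n → I)
  | .unit ν => ν
  | .x _ ν => ν
  | .tau _ _ ν => ν

variable (Q : I → I → MvPolynomial (Fin 2) k) (I' : Set I)

lemma adjoin_gens :
    Algebra.adjoin k (Set.range fun g : Gen I n => mk Q (FreeAlgebra.ι k g)) = ⊤ := by
  have h2 := congrArg (Subalgebra.map (mk Q)) (FreeAlgebra.adjoin_range_ι k (Gen I n))
  rw [AlgHom.map_adjoin, ← Set.range_comp, Algebra.map_top] at h2
  rw [show ((mk Q : FA k I n →ₐ[k] HQ k I n Q) ∘ FreeAlgebra.ι k) =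
    (fun g : Gen I n => mk Q (FreeAlgebra.ι k g)) from rfl] at h2
  rw [h2]
  exact (AlgHom.range_eq_top (mk Q)).mpr (RingQuot.mkAlgHom_surjective k (Rel Q))

lemma hq_induction {p : HQ k I n Q → Prop}
    (gen : ∀ g : Gen I n, p (mk Q (FreeAlgebra.ι k g)))
    (alg : ∀ r : k, p (algebraMap k (HQ k I n Q) r))
    (add : ∀ x y, p x → p y → p (x + y))
    (mul : ∀ x y, p x → p y → p (x * y)) : ∀ x, p x := by
  intro x
  have hx : x ∈ Algebra.adjoin k (Set.range fun g : Gen I n => mk Q (FreeAlgebra.ι k g)) := by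
    rw [adjoin_gens]; trivial
  refine Algebra.adjoin_induction ?_ alg ?_ ?_ hx
  · rintro y ⟨g, rfl⟩; exact gen g
  · intro a b _ _ ha hb; exact add a b ha hb
  · intro a b _ _ ha hb; exact mul a b ha hb

def NS : Set (HQ k I n Q) :=
  {z | ∃ (a : HQ k I n Q) (ν : Fin n → I) (_ : Good I' ν), z = a * mk Q (E k ν)}

lemma NS_mul_gen {x : HQ k I n Q} (hx : x ∈ Submodule.span k (NS Q I')) (g : Gen I n) :
    x * mk Q (FreeAlgebra.ι k g) ∈ Submodule.span k (NS Q I') := by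
  refine Submodule.span_induction ?_ ?_ ?_ ?_ hx
  · rintro z ⟨a, lam, hlam, rfl⟩
    cases g with
    | unit mu =>
      rw [show (FreeAlgebra.ι k (Gen.unit mu) : FA k I n) = E k mu from rfl]
      by_cases he : lam = mu
      · subst he
        have hid : mk Q (E k lam) * mk Q (E k lam) = mk Q (E k lam) := by
          rw [← map_mul]; exact mk_rel _ (Rel.unit_mul_self _)
        rw [mul_assoc, hid]
        exact Submodule.subset_span ⟨a, lam, hlam, rfl⟩
      · have h0 : mk Q (E k lam) * mk Q (E k mu) = 0 := by
          rw [← map_mul, mk_rel _ (Rel.unit_mul_ne _ _ he), map_zero]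
        rw [mul_assoc, h0, mul_zero]
        exact zero_mem _
    | x a' mu =>
      rw [show (FreeAlgebra.ι k (Gen.x a' mu) : FA k I n) = Xg k a' mu from rfl]
      have hs : mk Q (Xg k a' mu) = mk Q (E k mu) * mk Q (Xg k a' mu) * mk Q (E k mu) := by
        rw [← map_mul, ← map_mul]; exact mk_rel _ (Rel.x_sandwich a' mu)
      rw [hs]
      by_cases he : lam = mu
      · subst he
        refine Submodule.subset_span
          ⟨a * mk Q (E k lam) * (mk Q (E k lam) * mk Q (Xg k a' lam)), lam, hlam, ?_⟩
        simp only [mul_assoc]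
      · have h0 : mk Q (E k lam) * mk Q (E k mu) = 0 := by
          rw [← map_mul, mk_rel _ (Rel.unit_mul_ne _ _ he), map_zero]
        have hre : a * mk Q (E k lam) *
            (mk Q (E k mu) * mk Q (Xg k a' mu) * mk Q (E k mu)) =
            a * ((mk Q (E k lam) * mk Q (E k mu)) *
              (mk Q (Xg k a' mu) * mk Q (E k mu))) := by
          simp only [mul_assoc]
        rw [hre, h0, zero_mul, mul_zero]
        exact zero_mem _
    | tau i hi mu =>
      rw [show (FreeAlgebra.ι k (Gen.tau i hi mu) : FA k I n) = Tg k i hi mu from rfl]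
      have hs : mk Q (Tg k i hi mu) =
          mk Q (E k (swapSeq i mu)) * mk Q (Tg k i hi mu) * mk Q (E k mu) := by
        rw [← map_mul, ← map_mul]; exact mk_rel _ (Rel.tau_sandwich i hi mu)
      rw [hs]
      by_cases he : lam = swapSeq i mu
      · have hmu : Good I' mu := (good_swapSeq I' i mu).mp (he ▸ hlam)
        refine Submodule.subset_span
          ⟨a * mk Q (E k lam) * (mk Q (E k (swapSeq i mu)) * mk Q (Tg k i hi mu)),
            mu, hmu, ?_⟩
        simp only [mul_assoc]
      · have h0 : mk Q (E k lam) * mk Q (E k (swapSeq i mu)) = 0 := by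
          rw [← map_mul, mk_rel _ (Rel.unit_mul_ne _ _ he), map_zero]
        have hre : a * mk Q (E k lam) *
            (mk Q (E k (swapSeq i mu)) * mk Q (Tg k i hi mu) * mk Q (E k mu)) =
            a * ((mk Q (E k lam) * mk Q (E k (swapSeq i mu))) *
              (mk Q (Tg k i hi mu) * mk Q (E k mu))) := by
          simp only [mul_assoc]
        rw [hre, h0, zero_mul, mul_zero]
        exact zero_mem _
  · rw [zero_mul]; exact zero_mem _
  · intro y z _ _ hy hz; rw [add_mul]; exact add_mem hy hz
  · intro c y _ hy; rw [smul_mul_assoc]; exact Submodule.smul_mem _ _ hy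

lemma N_mul_right : ∀ y : HQ k I n Q, ∀ x ∈ Submodule.span k (NS Q I'),
    x * y ∈ Submodule.span k (NS Q I') := by
  refine hq_induction Q ?_ ?_ ?_ ?_
  · intro g x hx; exact NS_mul_gen Q I' hx g
  · intro r x hx
    have : x * algebraMap k (HQ k I n Q) r = r • x := by
      rw [← Algebra.commutes, ← Algebra.smul_def]
    rw [this]; exact Submodule.smul_mem _ _ hx
  · intro y z hy hz x hx; rw [mul_add]; exact add_mem (hy x hx) (hz x hx)
  · intro y z hy hz x hx; rw [← mul_assoc]; exact hz _ (hy x hx)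

lemma e_mem {ν : Fin n → I} (hν : Good I' ν) :
    mk Q (E k ν) ∈ Submodule.span k (NS Q I') :=
  Submodule.subset_span ⟨1, ν, hν, (one_mul _).symm⟩

lemma N_mul_bad {x : HQ k I n Q} (hx : x ∈ Submodule.span k (NS Q I'))
    {μ : Fin n → I} (hμ : ¬ Good I' μ) : x * mk Q (E k μ) = 0 := by
  refine Submodule.span_induction ?_ ?_ ?_ ?_ hx
  · rintro z ⟨a, lam, hlam, rfl⟩
    have hne : lam ≠ μ := fun he => hμ (he ▸ hlam)
    have h0 : mk Q (E k lam) * mk Q (E k μ) = 0 := by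
      rw [← map_mul, mk_rel _ (Rel.unit_mul_ne _ _ hne), map_zero]
    rw [mul_assoc, h0, mul_zero]
  · rw [zero_mul]
  · intro y z _ _ hy hz; rw [add_mul, hy, hz, add_zero]
  · intro c y _ hy; rw [smul_mul_assoc, hy, smul_zero]

lemma sandwich_zero {ν μ : Fin n → I} (hν : Good I' ν) (hμ : ¬ Good I' μ)
    (x : HQ k I n Q) : mk Q (E k ν) * x * mk Q (E k μ) = 0 :=
  N_mul_bad Q I' (N_mul_right Q I' x _ (e_mem Q I' hν)) hμ

lemma key (φ : HQ k I n Q →ₐ[k] HQ k I n Q)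
    (hgood : ∀ g : Gen I n, Good I' (genSeq g) →
      φ (mk Q (FreeAlgebra.ι k g)) = mk Q (FreeAlgebra.ι k g))
    (hbad : ∀ g : Gen I n, ¬ Good I' (genSeq g) → φ (mk Q (FreeAlgebra.ι k g)) = 0)
    {ν ν' : Fin n → I} (hν : Good I' ν) (hν' : Good I' ν') :
    ∀ x a b : HQ k I n Q,
      mk Q (E k ν) * a * (x - φ x) * b * mk Q (E k ν') = 0 := by
  refine hq_induction Q ?_ ?_ ?_ ?_
  · intro g a b
    by_cases hg : Good I' (genSeq g)
    · rw [hgood g hg, sub_self, mul_zero, zero_mul, zero_mul]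
    · rw [hbad g hg, sub_zero]
      cases g with
      | unit mu =>
        have hg' : ¬ Good I' mu := hg
        rw [show (FreeAlgebra.ι k (Gen.unit mu) : FA k I n) = E k mu from rfl,
          sandwich_zero Q I' hν hg' a, zero_mul, zero_mul]
      | x a' mu =>
        rw [show (FreeAlgebra.ι k (Gen.x a' mu) : FA k I n) = Xg k a' mu from rfl]
        have hs : mk Q (Xg k a' mu) =
            mk Q (E k mu) * mk Q (Xg k a' mu) * mk Q (E k mu) := by
          rw [← map_mul, ← map_mul]; exact mk_rel _ (Rel.x_sandwich a' mu)
        rw [hs]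
        have hre : mk Q (E k ν) * a *
            (mk Q (E k mu) * mk Q (Xg k a' mu) * mk Q (E k mu)) * b * mk Q (E k ν') =
            mk Q (E k ν) * a * mk Q (E k mu) *
              (mk Q (Xg k a' mu) * (mk Q (E k mu) * (b * mk Q (E k ν')))) := by
          simp only [mul_assoc]
        have hg' : ¬ Good I' mu := hg
        rw [hre, sandwich_zero Q I' hν hg' a, zero_mul]
      | tau i hi mu =>
        rw [show (FreeAlgebra.ι k (Gen.tau i hi mu) : FA k I n) = Tg k i hi mu from rfl]
        have hgs : ¬ Good I' (swapSeq i mu) := fun h => hg ((good_swapSeq I' i mu).mp h)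
        have hs : mk Q (Tg k i hi mu) =
            mk Q (E k (swapSeq i mu)) * mk Q (Tg k i hi mu) * mk Q (E k mu) := by
          rw [← map_mul, ← map_mul]; exact mk_rel _ (Rel.tau_sandwich i hi mu)
        rw [hs]
        have hre : mk Q (E k ν) * a *
            (mk Q (E k (swapSeq i mu)) * mk Q (Tg k i hi mu) * mk Q (E k mu)) * b *
              mk Q (E k ν') =
            mk Q (E k ν) * a * mk Q (E k (swapSeq i mu)) *
              (mk Q (Tg k i hi mu) * (mk Q (E k mu) * (b * mk Q (E k ν')))) := by
          simp only [mul_assoc]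
        rw [hre, sandwich_zero Q I' hν hgs a, zero_mul]
  · intro r a b
    rw [AlgHom.commutes, sub_self, mul_zero, zero_mul, zero_mul]
  · intro x y hx hy a b
    have h1 : (x + y) - φ (x + y) = (x - φ x) + (y - φ y) := by
      rw [map_add]; abel
    rw [h1, mul_add, add_mul, add_mul, hx a b, hy a b, add_zero]
  · intro x y hx hy a b
    have h1 : (x * y) - φ (x * y) = x * (y - φ y) + (x - φ x) * φ y := by
      rw [map_mul, mul_sub, sub_mul]; abel
    rw [h1, mul_add, add_mul, add_mul]
    have h2 : mk Q (E k ν) * a * (x * (y - φ y)) * b * mk Q (E k ν') = 0 := by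
      have := hy (a * x) b
      simp only [mul_assoc] at this ⊢
      exact this
    have h3 : mk Q (E k ν) * a * ((x - φ x) * φ y) * b * mk Q (E k ν') = 0 := by
      have := hx a (φ y * b)
      simp only [mul_assoc] at this ⊢
      exact this
    rw [h2, h3, add_zero]

end Rouq

open Rouq in
/-- For `Q` hermitian and `I' ⊆ I`, the canonical homomorphism
`H_n(Q') → H_n(Q)` (sending each generator to the generator of the same name)
is injective, and it restricts to a bijection
`1_ν H_n(Q') 1_{ν'} → 1_ν H_n(Q) 1_{ν'}` for all `ν, ν' ∈ (I')^n`. -/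
theorem statement2 (k : Type) [CommRing k] (I : Type) (n : ℕ) (hn : 1 ≤ n)
    (Q : I → I → MvPolynomial (Fin 2) k) (hQdiag : ∀ i, Q i i = 0)
    (hherm : Hermitian Q) (I' : Set I)
    (f : HQ k ↥I' n (fun i j => Q i j) →ₐ[k] HQ k I n Q)
    (hf_unit : ∀ ν : Fin n → ↥I',
      f (mk (fun i j : ↥I' => Q i j) (E k ν)) = mk Q (E k fun b => (ν b : I)))
    (hf_x : ∀ (a : Fin n) (ν : Fin n → ↥I'),
      f (mk (fun i j : ↥I' => Q i j) (Xg k a ν)) = mk Q (Xg k a fun b => (ν b : I)))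
    (hf_tau : ∀ (i : ℕ) (h : i + 1 < n) (ν : Fin n → ↥I'),
      f (mk (fun i j : ↥I' => Q i j) (Tg k i h ν)) = mk Q (Tg k i h fun b => (ν b : I))) :
    Function.Injective f ∧
    ∀ ν ν' : Fin n → ↥I',
      f '' (Set.range fun a : HQ k ↥I' n (fun i j => Q i j) =>
          mk (fun i j : ↥I' => Q i j) (E k ν) * a * mk (fun i j : ↥I' => Q i j) (E k ν'))
        = Set.range fun a : HQ k I n Q =>
            mk Q (E k fun b => (ν b : I)) * a * mk Q (E k fun b => (ν' b : I)) := by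
  classical
  let g : HQ k I n Q →ₐ[k] HQ k ↥I' n (fun i j => Q i j) :=
    RingQuot.liftAlgHom k ⟨Gmap Q I', Gmap_rel Q I'⟩
  have hg_mk : ∀ p : FA k I n, g (mk Q p) = Gmap Q I' p := fun p =>
    RingQuot.liftAlgHom_mkAlgHom_apply k (Gmap Q I') (Gmap_rel Q I') p
  have hgf : ∀ x, g (f x) = x := by
    have hcomp : ((g.comp f).comp (mk (fun i j : ↥I' => Q i j))) =
        mk (fun i j : ↥I' => Q i j) := by
      apply FreeAlgebra.hom_ext
      funext gen
      cases gen with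
      | unit ν =>
        show g (f (mk (fun i j : ↥I' => Q i j) (E k ν))) = mk (fun i j : ↥I' => Q i j) (E k ν)
        rw [hf_unit, hg_mk, Gmap_E_good Q I' (good_coe I' ν), res_coe]
      | x a ν =>
        show g (f (mk (fun i j : ↥I' => Q i j) (Xg k a ν))) =
          mk (fun i j : ↥I' => Q i j) (Xg k a ν)
        rw [hf_x, hg_mk, Gmap_Xg_good Q I' a (good_coe I' ν), res_coe]
      | tau i hi ν =>
        show g (f (mk (fun i j : ↥I' => Q i j) (Tg k i hi ν))) =
          mk (fun i j : ↥I' => Q i j) (Tg k i hi ν)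
        rw [hf_tau, hg_mk, Gmap_Tg_good Q I' i hi (good_coe I' ν), res_coe]
    intro x
    obtain ⟨p, rfl⟩ := RingQuot.mkAlgHom_surjective k _ x
    exact AlgHom.congr_fun hcomp p
  have hφgood : ∀ gen : Gen I n, Good I' (genSeq gen) →
      (f.comp g) (mk Q (FreeAlgebra.ι k gen)) = mk Q (FreeAlgebra.ι k gen) := by
    intro gen hg
    cases gen with
    | unit ν =>
      have hg' : Good I' ν := hg
      show f (g (mk Q (E k ν))) = mk Q (E k ν)
      rw [hg_mk, Gmap_E_good Q I' hg', hf_unit]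
      rfl
    | x a ν =>
      have hg' : Good I' ν := hg
      show f (g (mk Q (Xg k a ν))) = mk Q (Xg k a ν)
      rw [hg_mk, Gmap_Xg_good Q I' a hg', hf_x]
      rfl
    | tau i hi ν =>
      have hg' : Good I' ν := hg
      show f (g (mk Q (Tg k i hi ν))) = mk Q (Tg k i hi ν)
      rw [hg_mk, Gmap_Tg_good Q I' i hi hg', hf_tau]
      rfl
  have hφbad : ∀ gen : Gen I n, ¬ Good I' (genSeq gen) →
      (f.comp g) (mk Q (FreeAlgebra.ι k gen)) = 0 := by
    intro gen hg
    cases gen with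
    | unit ν =>
      have hg' : ¬ Good I' ν := hg
      show f (g (mk Q (E k ν))) = 0
      rw [hg_mk, Gmap_E_bad Q I' hg', map_zero]
    | x a ν =>
      have hg' : ¬ Good I' ν := hg
      show f (g (mk Q (Xg k a ν))) = 0
      rw [hg_mk, Gmap_Xg_bad Q I' a hg', map_zero]
    | tau i hi ν =>
      have hg' : ¬ Good I' ν := hg
      show f (g (mk Q (Tg k i hi ν))) = 0
      rw [hg_mk, Gmap_Tg_bad Q I' i hi hg', map_zero]
  constructor
  · intro x y hxy
    rw [← hgf x, hxy, hgf y]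
  · intro ν ν'
    ext b
    constructor
    · rintro ⟨w, ⟨a, rfl⟩, rfl⟩
      exact ⟨f a, by rw [map_mul, map_mul, hf_unit, hf_unit]⟩
    · rintro ⟨a, rfl⟩
      refine ⟨mk (fun i j : ↥I' => Q i j) (E k ν) * g a *
          mk (fun i j : ↥I' => Q i j) (E k ν'), ⟨g a, rfl⟩, ?_⟩
      rw [map_mul, map_mul, hf_unit, hf_unit]
      have hk := key Q I' (f.comp g) hφgood hφbad (good_coe I' ν) (good_coe I' ν') a 1 1
      simp only [mul_one] at hk
      rw [mul_sub, sub_mul, sub_eq_zero] at hk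
      exact hk.symm
end

section
/- Let C be a ring, B a C-algebra and A a B-algebra (so A is also a C-algebra via the composite C → B → A). Assume A is a finitely generated projective left B-module and B is a finitely generated projective left C-module. If t : A → B is a Frobenius form for A over B and t' : B → C is a Frobenius form for B over C, then the composite t'∘t : A → C is a Frobenius form for A over C; in particular A is a finitely generated projective left C-module and the map A → Hom_C(A,C), a ↦ (a' ↦ t'(t(a'a))), is bijective. -/
namespace Frob

variable {A B C : Type} [Ring A] [Ring B] [Ring C]

/-- `g : A → B` is a homomorphism of left `B`-modules, where `A` is a
`B`-algebra via `ψ`. -/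
def IsLeftLinear (ψ : B →+* A) (g : A → B) : Prop :=
  (∀ x y : A, g (x + y) = g x + g y) ∧ ∀ (b : B) (x : A), g (ψ b * x) = b * g x

/-- `t : A → B` is a homomorphism of `(B,B)`-bimodules. -/
def IsBimodMap (ψ : B →+* A) (t : A → B) : Prop :=
  (∀ x y : A, t (x + y) = t x + t y) ∧
    (∀ (b : B) (x : A), t (ψ b * x) = b * t x) ∧
    (∀ (b : B) (x : A), t (x * ψ b) = t x * b)

/-- `A` is a finitely generated projective left `B`-module (dual basis
formulation). -/
def IsFGProj (ψ : B →+* A) : Prop :=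
  ∃ (m : ℕ) (x : Fin m → A) (y : Fin m → A → B),
    (∀ j, IsLeftLinear ψ (y j)) ∧ ∀ a : A, a = ∑ j, ψ (y j a) * x j

/-- `t : A → B` is a Frobenius form: a `(B,B)`-bimodule map such that `A` is a
finitely generated projective left `B`-module and
`\hat t : A → Hom_B(A,B), a ↦ (a' ↦ t(a'a))` is bijective. -/
def IsFrobeniusForm (ψ : B →+* A) (t : A → B) : Prop :=
  IsBimodMap ψ t ∧ IsFGProj ψ ∧
    (∀ a : A, (∀ a' : A, t (a' * a) = 0) → a = 0) ∧
    (∀ g : A → B, IsLeftLinear ψ g → ∃ a : A, ∀ a' : A, g a' = t (a' * a))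

end Frob

open Frob in
/-- If `t : A → B` and `t' : B → C` are Frobenius forms then
`t' ∘ t : A → C` is a Frobenius form (in particular `A` is a finitely
generated projective left `C`-module and the associated map
`A → Hom_C(A,C)` is bijective). -/
theorem statement14 {A B C : Type} [Ring A] [Ring B] [Ring C]
    (φ : C →+* B) (ψ : B →+* A)
    (hAB : IsFGProj ψ) (hBC : IsFGProj φ)
    (t : A → B) (ht : IsFrobeniusForm ψ t)
    (t' : B → C) (ht' : IsFrobeniusForm φ t') :
    IsFrobeniusForm (ψ.comp φ) (t' ∘ t) := by

  obtain ⟨htB, hFGAB, hinjt, hsurjt⟩ := ht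
  obtain ⟨htC, hFGBC, hinjt', hsurjt'⟩ := ht'
  have ht'0 : t' 0 = 0 := by
    have h := htC.1 0 0
    rw [add_zero] at h
    exact left_eq_add.mp h
  have ht'neg : ∀ b : B, t' (-b) = - t' b := by
    intro b
    have h := htC.1 b (-b)
    rw [add_neg_cancel, ht'0] at h
    exact eq_neg_of_add_eq_zero_right h.symm
  have cancel : ∀ X Y : B, (∀ b' : B, t' (b' * X) = t' (b' * Y)) → X = Y := by
    intro X Y h
    have : X - Y = 0 := by
      apply hinjt' _
      intro b'
      rw [mul_sub, sub_eq_add_neg, htC.1, ht'neg, h b']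
      exact add_neg_cancel _
    exact sub_eq_zero.mp this
  refine ⟨⟨?_, ?_, ?_⟩, ?_, ?_, ?_⟩
  · intro x y
    simp only [Function.comp_apply, htB.1, htC.1]
  · intro c x
    simp only [Function.comp_apply, RingHom.comp_apply, htB.2.1, htC.2.1]
  · intro c x
    simp only [Function.comp_apply, RingHom.comp_apply, htB.2.2, htC.2.2]
  · -- FG projective
    obtain ⟨m, x, y, hy, hx⟩ := hAB
    obtain ⟨n, x', y', hy', hx'⟩ := hBC
    refine ⟨m * n,
      fun j => ψ (x' (finProdFinEquiv.symm j).2) * x (finProdFinEquiv.symm j).1,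
      fun j a => y' (finProdFinEquiv.symm j).2 (y (finProdFinEquiv.symm j).1 a),
      ?_, ?_⟩
    · intro j
      constructor
      · intro a b
        dsimp only
        rw [(hy _).1, (hy' _).1]
      · intro c a
        dsimp only
        rw [RingHom.comp_apply, (hy _).2, (hy' _).2]
    · intro a
      rw [Fintype.sum_equiv finProdFinEquiv.symm
        (fun j => (ψ.comp φ) (y' (finProdFinEquiv.symm j).2 (y (finProdFinEquiv.symm j).1 a)) *
          (ψ (x' (finProdFinEquiv.symm j).2) * x (finProdFinEquiv.symm j).1))
        (fun p => (ψ.comp φ) (y' p.2 (y p.1 a)) * (ψ (x' p.2) * x p.1))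
        (fun j => rfl)]
      rw [Fintype.sum_prod_type]
      conv_lhs => rw [hx a]
      refine Finset.sum_congr rfl (fun i _ => ?_)
      conv_lhs => rw [hx' (y i a)]
      rw [map_sum, Finset.sum_mul]
      refine Finset.sum_congr rfl (fun k _ => ?_)
      rw [map_mul, RingHom.comp_apply, mul_assoc]
  · -- injectivity
    intro a ha
    apply hinjt a
    intro a''
    apply hinjt' (t (a'' * a))
    intro b'
    rw [← htB.2.1, ← mul_assoc]
    exact ha (ψ b' * a'')
  · -- surjectivity
    intro g hg
    have key : ∀ a' : A, ∃ b : B, ∀ b' : B, g (ψ b' * a') = t' (b' * b) := by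
      intro a'
      apply hsurjt'
      constructor
      · intro b₁ b₂
        dsimp only
        rw [map_add, add_mul, hg.1]
      · intro c b
        dsimp only
        rw [map_mul, mul_assoc, ← RingHom.comp_apply, hg.2]
    choose β hβ using key
    have βadd : ∀ a₁ a₂ : A, β (a₁ + a₂) = β a₁ + β a₂ := by
      intro a₁ a₂
      apply cancel
      intro b'
      rw [← hβ, mul_add, hg.1, hβ, hβ, mul_add, htC.1]
    have βsmul : ∀ (b₀ : B) (a' : A), β (ψ b₀ * a') = b₀ * β a' := by
      intro b₀ a'
      apply cancel
      intro b'
      rw [← hβ, ← mul_assoc, ← map_mul, hβ, mul_assoc]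
    obtain ⟨a, haa⟩ := hsurjt β ⟨βadd, βsmul⟩
    refine ⟨a, fun a' => ?_⟩
    have := hβ a' 1
    rw [map_one, one_mul, one_mul, haa] at this
    exact this
end
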